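/- In the tensor product of two globular groups G and H, the two formulas π_n^ε(g ⊗ h) = Σ_i (π_i^ε - π_{i-1}^ε)(g) ⊗ π_{n-i}^{(-1)^i ε}(h) and π_n^ε(g ⊗ h) = Σ_i π_i^ε(g) ⊗ (π_{n-i}^{(-1)^i ε} - π_{n-i-1}^{-(-1)^i ε})(h) agree. -/

import Mathlib

open scoped TensorProduct

/-- The sign `(-1)^i ε`: `ε` if `i` is even, the opposite sign if `i` is odd. -/
def sflip (i : ℤ) (ε : Bool) : Bool := if Even i then ε else !ε

private lemma sflip_succ (i : ℤ) (ε : Bool) : sflip (i + 1) ε = !(sflip i ε) := by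
  unfold sflip
  by_cases he : Even i
  · rw [if_pos he, if_neg (fun hc => (Int.even_add_one.mp hc) he)]
  · rw [if_pos (Int.even_add_one.mpr he), if_neg he, Bool.not_not]

private lemma icc_insert (a b : ℤ) (h : a ≤ b + 1) :
    Finset.Icc a (b + 1) = insert (b + 1) (Finset.Icc a b) := by
  ext x
  simp only [Finset.mem_Icc, Finset.mem_insert]
  omega

private lemma telescope {M : Type*} [AddCommGroup M] (f : ℤ → M) (U : ℤ) (hU : 0 ≤ U) :
    ∑ i ∈ Finset.Icc (0 : ℤ) U, (f (i + 1) - f i) = f (U + 1) - f 0 := by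
  refine Int.le_induction (motive := fun V _ => ∑ i ∈ Finset.Icc (0 : ℤ) V, (f (i + 1) - f i) = f (V + 1) - f 0) ?_ ?_ U hU
  · simp
  · intro k hk ih
    rw [icc_insert 0 k (by omega), Finset.sum_insert (by simp), ih]
    abel

/-- In the tensor product of two globular groups, the two formulas
`π_n^ε(g ⊗ h) = Σ_i (π_i^ε - π_{i-1}^ε)(g) ⊗ π_{n-i}^{(-1)^i ε}(h)` and
`π_n^ε(g ⊗ h) = Σ_i π_i^ε(g) ⊗ (π_{n-i}^{(-1)^i ε} - π_{n-i-1}^{-(-1)^i ε})(h)` agree. -/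
theorem tensor_pi_alternate_formula
    {G H : Type*} [AddCommGroup G] [AddCommGroup H]
    (π : Bool → ℤ → G →+ G) (ρ : Bool → ℤ → H →+ H)
    (hπneg : ∀ (ε : Bool) (k : ℤ), k < 0 → π ε k = 0)
    (hρneg : ∀ (ε : Bool) (k : ℤ), k < 0 → ρ ε k = 0)
    (hπlt : ∀ (ε δ : Bool) (i j : ℤ), i < j → ∀ x, π ε i (π δ j x) = π ε i x)
    (hπle : ∀ (ε δ : Bool) (i j : ℤ), j ≤ i → ∀ x, π ε i (π δ j x) = π δ j x)
    (hρlt : ∀ (ε δ : Bool) (i j : ℤ), i < j → ∀ y, ρ ε i (ρ δ j y) = ρ ε i y)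
    (hρle : ∀ (ε δ : Bool) (i j : ℤ), j ≤ i → ∀ y, ρ ε i (ρ δ j y) = ρ δ j y)
    (hπar : ∀ x : G, ∃ n : ℤ, π true n x = x)
    (hρar : ∀ y : H, ∃ n : ℤ, ρ true n y = y)
    (ε : Bool) (n : ℤ) (g : G) (h : H) :
    ∑ᶠ i : ℤ, (π ε i g - π ε (i - 1) g) ⊗ₜ[ℤ] ρ (sflip i ε) (n - i) h =
      ∑ᶠ i : ℤ,
        (π ε i g) ⊗ₜ[ℤ]
          (ρ (sflip i ε) (n - i) h - ρ (!(sflip i ε)) (n - i - 1) h) := by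
  set A : ℤ → G := fun i => π ε i g with hA
  set B : ℤ → H := fun i => ρ (sflip i ε) (n - i) h with hB
  have hA0 : ∀ i : ℤ, i < 0 → A i = 0 := fun i hi => by
    simp [hA, hπneg ε i hi]
  have hB0 : ∀ i : ℤ, n < i → B i = 0 := fun i hi => by
    simp [hB, hρneg (sflip i ε) (n - i) (by omega)]
  have hBsucc : ∀ i : ℤ, B (i + 1) = ρ (!(sflip i ε)) (n - i - 1) h := fun i => by
    simp [hB, sflip_succ]
    ring_nf
  set U : ℤ := max n 0 with hU
  have hU0 : 0 ≤ U := le_max_right n 0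
  set s : Finset ℤ := Finset.Icc (0 : ℤ) U with hs
  -- rewrite both finsums as finite sums over s
  have hL : ∑ᶠ i : ℤ, (A i - A (i - 1)) ⊗ₜ[ℤ] B i = ∑ i ∈ s, (A i - A (i - 1)) ⊗ₜ[ℤ] B i := by
    apply finsum_eq_finset_sum_of_support_subset
    intro i hi
    simp only [Function.mem_support] at hi
    simp only [hs, Finset.coe_Icc, Set.mem_Icc]
    constructor
    · by_contra hn
      exact hi (by rw [hA0 i (by omega), hA0 (i - 1) (by omega), sub_zero,
        TensorProduct.zero_tmul])
    · by_contra hn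
      exact hi (by rw [hB0 i (by omega), TensorProduct.tmul_zero])
  have hR : ∑ᶠ i : ℤ, A i ⊗ₜ[ℤ] (B i - B (i + 1)) = ∑ i ∈ s, A i ⊗ₜ[ℤ] (B i - B (i + 1)) := by
    apply finsum_eq_finset_sum_of_support_subset
    intro i hi
    simp only [Function.mem_support] at hi
    simp only [hs, Finset.coe_Icc, Set.mem_Icc]
    constructor
    · by_contra hn
      exact hi (by rw [hA0 i (by omega), TensorProduct.zero_tmul])
    · by_contra hn
      exact hi (by rw [hB0 i (by omega), hB0 (i + 1) (by omega), sub_zero,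
        TensorProduct.tmul_zero])
  have hRrw : ∑ᶠ i : ℤ,
      (π ε i g) ⊗ₜ[ℤ] (ρ (sflip i ε) (n - i) h - ρ (!(sflip i ε)) (n - i - 1) h) =
      ∑ᶠ i : ℤ, A i ⊗ₜ[ℤ] (B i - B (i + 1)) := by
    apply finsum_congr
    intro i
    rw [hBsucc i]
  rw [hRrw, hL, hR]
  -- now a finite telescoping argument
  have key : ∑ i ∈ s, ((A i - A (i - 1)) ⊗ₜ[ℤ] B i - A i ⊗ₜ[ℤ] (B i - B (i + 1))) =
      ∑ i ∈ s, (A i ⊗ₜ[ℤ] B (i + 1) - A (i - 1) ⊗ₜ[ℤ] B i) := by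
    apply Finset.sum_congr rfl
    intro i _
    rw [TensorProduct.sub_tmul, TensorProduct.tmul_sub]
    abel
  have tel : ∑ i ∈ s, (A i ⊗ₜ[ℤ] B (i + 1) - A (i - 1) ⊗ₜ[ℤ] B i) = 0 := by
    have := telescope (fun i => A (i - 1) ⊗ₜ[ℤ] B i) U hU0
    simp only [add_sub_cancel_right] at this
    rw [hs, this, hA0 (0 - 1) (by omega), hB0 (U + 1) (by omega)]
    simp
  have := (Finset.sum_sub_distrib (s := s)
    (f := fun i => (A i - A (i - 1)) ⊗ₜ[ℤ] B i)
    (g := fun i => A i ⊗ₜ[ℤ] (B i - B (i + 1)))).symm.trans (key.trans tel)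
  exact sub_eq_zero.mp this
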